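/- For every integer k ≥ 2, the inducibility of the directed path P⃗_k over all oriented graphs satisfies I(P⃗_k) ≥ k! / ((k+1)^{k−1} − 1); this lower bound is achieved by the sequence of iterated balanced blow-ups of the directed (k+1)-cycle C⃗_{k+1} (in particular, I(P⃗₄) ≥ 6/31, I(P⃗₅) ≥ 24/259, and I(P⃗₆) ≥ 120/2801). -/

import Mathlib

open scoped Classical

/-- An oriented graph: the arc relation has no loops and no 2-cycles. -/
def IsOriented {V : Type*} (A : V → V → Prop) : Prop :=
  ∀ a b : V, A a b → ¬ A b a

/-- `T⃗₃`-freeness: no three vertices span the arcs a→b, b→c, a→c. -/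
def T3Free {V : Type*} (A : V → V → Prop) : Prop :=
  ∀ a b c : V, ¬ (A a b ∧ A b c ∧ A a c)

/-- `S` is the vertex set of an induced copy of the directed path `P⃗ₖ` in the
oriented graph with arc relation `A`. -/
def IsInducedPath {V : Type*} (A : V → V → Prop) (k : ℕ) (S : Finset V) : Prop :=
  ∃ f : Fin k → V, Function.Injective f ∧ (∀ v : V, v ∈ S ↔ ∃ i, f i = v) ∧
    ∀ i j : Fin k, A (f i) (f j) ↔ (j : ℕ) = (i : ℕ) + 1

/-- The number of induced copies of `P⃗ₖ`. -/
noncomputable def numPaths {V : Type*} [Fintype V] [DecidableEq V]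
    (A : V → V → Prop) (k : ℕ) : ℕ :=
  (Finset.univ.filter fun S : Finset V => IsInducedPath A k S).card

/-- The number of induced copies of `P⃗ₖ` containing all vertices of `T`. -/
noncomputable def numPathsThrough {V : Type*} [Fintype V] [DecidableEq V]
    (A : V → V → Prop) (k : ℕ) (T : Finset V) : ℕ :=
  (Finset.univ.filter fun S : Finset V => IsInducedPath A k S ∧ T ⊆ S).card

/-- The density of induced copies of `P⃗ₖ`. -/
noncomputable def pathDensity {V : Type*} [Fintype V] [DecidableEq V]
    (A : V → V → Prop) (k : ℕ) : ℝ :=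
  (numPaths A k : ℝ) / ((Fintype.card V).choose k : ℝ)

/-- The maximum density of induced copies of `P⃗ₖ` over all `T⃗₃`-free oriented
graphs on `n` vertices. -/
noncomputable def maxDensityT3 (k n : ℕ) : ℝ :=
  sSup {d : ℝ | ∃ A : Fin n → Fin n → Prop, IsOriented A ∧ T3Free A ∧ d = pathDensity A k}

/-- The maximum density of induced copies of `P⃗ₖ` over all oriented graphs on `n`
vertices. -/
noncomputable def maxDensityAll (k n : ℕ) : ℝ :=
  sSup {d : ℝ | ∃ A : Fin n → Fin n → Prop, IsOriented A ∧ d = pathDensity A k}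

/-- `S` is the vertex set of an induced copy of the oriented graph `H` in the
oriented graph with arc relation `A`. -/
def IsInducedCopy {V W : Type*} (H : W → W → Prop) (A : V → V → Prop) (S : Finset V) : Prop :=
  ∃ f : W → V, Function.Injective f ∧ (∀ v : V, v ∈ S ↔ ∃ w, f w = v) ∧
    ∀ a b : W, A (f a) (f b) ↔ H a b

/-- The number of induced copies of `H` in `A`. -/
noncomputable def numCopies {V W : Type*} [Fintype V] [DecidableEq V]
    (H : W → W → Prop) (A : V → V → Prop) : ℕ :=
  (Finset.univ.filter fun S : Finset V => IsInducedCopy H A S).card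

/-- The number of (unordered) pairs of vertices on which the two oriented graphs `A`
and `B` differ (an arc must be added, removed, or reoriented). -/
noncomputable def pairDiff {V : Type*} [Fintype V] [LinearOrder V]
    (A B : V → V → Prop) : ℕ :=
  (Finset.univ.filter fun p : V × V => p.1 < p.2 ∧
    ¬ ((A p.1 p.2 ↔ B p.1 p.2) ∧ (A p.2 p.1 ↔ B p.2 p.1))).card

/-- `A` is a blow-up of the directed 5-cycle with parts given by the fibers of `g`. -/
def IsBlowupC5 {V : Type*} (A : V → V → Prop) (g : V → Fin 5) : Prop :=
  ∀ u v : V, A u v ↔ g v = g u + 1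

/-- The size of the part of vertices mapped to `i`. -/
noncomputable def partSize {V : Type*} [Fintype V] {m : ℕ} (g : V → Fin m) (i : Fin m) : ℕ :=
  (Finset.univ.filter fun v : V => g v = i).card

/-- `A` is a balanced blow-up of the directed 5-cycle, i.e. isomorphic to `C⃗₅(n)`. -/
def IsBalancedBlowupC5 {V : Type*} [Fintype V] (A : V → V → Prop) : Prop :=
  ∃ g : V → Fin 5, IsBlowupC5 A g ∧
    ∀ i j : Fin 5, (partSize g i : ℤ) - (partSize g j : ℤ) ≤ 1

open Finset

/- ============ the iterated blow-up construction ============ -/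

def Arc (q : ℕ) (u v : ℕ) : Prop :=
  if q < 2 ∨ u = v then False
  else if u % q = v % q then Arc q (u / q) (v / q)
  else v % q = (u % q + 1) % q
termination_by u + v
decreasing_by
  rename_i h _
  push_neg at h
  obtain ⟨hq, huv⟩ := h
  have h1 : u / q ≤ u := Nat.div_le_self _ _
  have h2 : v / q ≤ v := Nat.div_le_self _ _
  rcases Nat.eq_zero_or_pos u with hu | hu
  · have hv : 0 < v := by omega
    have := Nat.div_lt_self hv hq
    omega
  · have := Nat.div_lt_self hu hq
    omega

lemma arc_irrefl (q u : ℕ) : ¬ Arc q u u := by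
  rw [Arc]; simp

lemma arc_def {q u v : ℕ} (hq : 2 ≤ q) (huv : u ≠ v) :
    Arc q u v ↔ (if u % q = v % q then Arc q (u / q) (v / q)
      else v % q = (u % q + 1) % q) := by
  rw [Arc]
  have : ¬ (q < 2 ∨ u = v) := by omega
  rw [if_neg this]

lemma succ_mod_ne {q ρ : ℕ} (hq : 2 ≤ q) (hρ : ρ < q) : (ρ + 1) % q ≠ ρ := by
  have : (ρ + 1) % q = if ρ + 1 = q then 0 else ρ + 1 := by
    split
    · rename_i hh; rw [hh]; exact Nat.mod_self q
    · exact Nat.mod_eq_of_lt (by omega)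
  split at this <;> omega

lemma arc_asymm {q : ℕ} (hq : 3 ≤ q) : ∀ u v : ℕ, Arc q u v → ¬ Arc q v u := by
  have hq2 : 2 ≤ q := by omega
  suffices h : ∀ n u v : ℕ, u + v = n → Arc q u v → ¬ Arc q v u by
    intro u v; exact h (u+v) u v rfl
  intro n
  induction n using Nat.strong_induction_on with
  | _ n ih =>
  intro u v hn h1 h2
  have huv : u ≠ v := by rintro rfl; exact arc_irrefl q u h1
  rw [arc_def hq2 huv] at h1
  rw [arc_def hq2 (Ne.symm huv)] at h2
  by_cases hr : u % q = v % q
  · rw [if_pos hr] at h1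
    rw [if_pos hr.symm] at h2
    have hlt : u / q + v / q < u + v := by
      have h1' : u / q ≤ u := Nat.div_le_self _ _
      have h2' : v / q ≤ v := Nat.div_le_self _ _
      rcases Nat.eq_zero_or_pos u with hu | hu
      · have hv : 0 < v := by omega
        have := Nat.div_lt_self hv hq2
        omega
      · have := Nat.div_lt_self hu hq2
        omega
    exact ih _ (by omega) _ _ rfl h1 h2
  · rw [if_neg hr] at h1
    rw [if_neg (Ne.symm hr)] at h2
    have hu : u % q < q := Nat.mod_lt _ (by omega)
    have hv : v % q < q := Nat.mod_lt _ (by omega)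
    have ha : (u % q + 1) % q = if u % q + 1 = q then 0 else u % q + 1 := by
      split
      · rename_i hh; rw [hh]; exact Nat.mod_self q
      · exact Nat.mod_eq_of_lt (by omega)
    have hb : (v % q + 1) % q = if v % q + 1 = q then 0 else v % q + 1 := by
      split
      · rename_i hh; rw [hh]; exact Nat.mod_self q
      · exact Nat.mod_eq_of_lt (by omega)
    rw [ha] at h1
    rw [hb] at h2
    split at h1 <;> split at h2 <;> omega

/- ============ part sizes ============ -/

def sz (q n i : ℕ) : ℕ := (n + (q - 1 - i)) / q

lemma lt_sz_iff {q n i : ℕ} (hq : 0 < q) (hi : i < q) (t : ℕ) :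
    t < sz q n i ↔ q * t + i < n := by
  unfold sz
  rw [show t < (n + (q - 1 - i)) / q ↔ t + 1 ≤ (n + (q - 1 - i)) / q from Iff.rfl,
    Nat.le_div_iff_mul_le hq]
  have e : (t + 1) * q = q * t + q := by ring
  rw [e]
  omega

lemma filter_mod_eq {q i : ℕ} (hq : 0 < q) (hi : i < q) (n : ℕ) :
    (Finset.range n).filter (fun v => v % q = i)
      = (Finset.range (sz q n i)).image (fun t => q * t + i) := by
  ext v
  simp only [mem_filter, mem_range, mem_image]
  constructor
  · rintro ⟨hv, hm⟩
    refine ⟨v / q, ?_, ?_⟩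
    · rw [lt_sz_iff hq hi]
      have := Nat.div_add_mod v q
      omega
    · have := Nat.div_add_mod v q
      omega
  · rintro ⟨t, ht, rfl⟩
    refine ⟨(lt_sz_iff hq hi t).mp ht, ?_⟩
    rw [Nat.mul_add_mod]
    exact Nat.mod_eq_of_lt hi

lemma card_filter_mod {q i : ℕ} (hq : 0 < q) (hi : i < q) (n : ℕ) :
    ((Finset.range n).filter (fun v => v % q = i)).card = sz q n i := by
  rw [filter_mod_eq hq hi, Finset.card_image_of_injective, Finset.card_range]
  intro a b hab
  simp only at hab
  have h : q * a = q * b := by omega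
  exact Nat.eq_of_mul_eq_mul_left hq h

lemma sum_sz {q : ℕ} (hq : 0 < q) (n : ℕ) :
    ∑ i ∈ Finset.range q, sz q n i = n := by
  have := Finset.card_eq_sum_card_fiberwise
    (f := fun v => v % q) (s := Finset.range n) (t := Finset.range q)
    (fun v _ => Finset.mem_range.mpr (Nat.mod_lt _ hq))
  rw [Finset.card_range] at this
  exact (Finset.sum_congr rfl fun i hi =>
    (card_filter_mod hq (Finset.mem_range.mp hi) n).symm).trans this.symm

lemma sz_lt_self {q n i : ℕ} (hq : 2 ≤ q) (hn : 2 ≤ n) : sz q n i < n := by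
  have h : sz q n i ≤ (n + q - 1) / q := by
    unfold sz; apply Nat.div_le_div_right; omega
  have h2 : (n + q - 1) / q < n := by
    rw [Nat.div_lt_iff_lt_mul (by omega)]
    have h2 : 2 * q ≤ n * q := Nat.mul_le_mul_right q hn
    have h4 : n * 2 ≤ n * q := Nat.mul_le_mul_left n hq
    omega
  omega

lemma sz_real_bounds {q n i : ℕ} (hq : 0 < q) (hi : i < q) :
    (n : ℝ) / q - 1 ≤ (sz q n i : ℝ) ∧ (sz q n i : ℝ) ≤ (n : ℝ) / q + 1 := by
  have hq' : (0:ℝ) < q := by exact_mod_cast hq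
  constructor
  · have h : n / q ≤ sz q n i := by unfold sz; apply Nat.div_le_div_right; omega
    have hnat : n < q * (n / q) + q := by
      have := Nat.div_add_mod n q
      have := Nat.mod_lt n hq
      omega
    rw [sub_le_iff_le_add, div_le_iff₀ hq']
    have h1 : (n : ℝ) < q * (n / q : ℕ) + q := by exact_mod_cast hnat
    have h2 : ((n / q : ℕ) : ℝ) ≤ (sz q n i : ℝ) := by exact_mod_cast h
    nlinarith
  · have hnat : q * sz q n i ≤ n + q := by
      unfold sz
      have h := Nat.mul_div_le (n + (q - 1 - i)) q
      omega
    rw [show (n:ℝ)/q + 1 = ((n:ℝ) + q)/q by field_simp, le_div_iff₀ hq']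
    have h1 : (q : ℝ) * sz q n i ≤ (n : ℝ) + q := by exact_mod_cast hnat
    nlinarith

/- ============ structure of induced copies ============ -/

section Structure

variable {q k n : ℕ}

def res (q : ℕ) {n : ℕ} (v : Fin n) : ℕ := (v : ℕ) % q

lemma res_lt (hq : 0 < q) (v : Fin n) : res q v < q := Nat.mod_lt _ hq

lemma arc_of_ne_res (hq : 2 ≤ q) {u v : Fin n} (h : res q u ≠ res q v) :
    (Arc q u v ↔ res q v = (res q u + 1) % q) := by
  have huv : (u : ℕ) ≠ (v : ℕ) := fun he => h (by unfold res; rw [he])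
  unfold res at h ⊢
  rw [arc_def hq huv, if_neg h]

lemma res_inj_of_mixed (hq : 2 ≤ q) (hk : 2 ≤ k) {f : Fin k → Fin n}
    (harc : ∀ i j : Fin k, Arc q (f i) (f j) ↔ (j : ℕ) = (i : ℕ) + 1)
    (hmix : ∃ c : Fin k, res q (f c) ≠ res q (f ⟨0, by omega⟩)) :
    ∀ a b : Fin k, res q (f a) = res q (f b) → a = b := by
  by_contra hcon
  push_neg at hcon
  obtain ⟨a, b, hab, hne⟩ := hcon
  set ρ := res q (f a) with hρdef
  have hbρ : res q (f b) = ρ := hab.symm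
  by_cases h0 : res q (f ⟨0, by omega⟩) = ρ
  · set CoR : Finset (Fin k) := univ.filter (fun i => res q (f i) ≠ ρ) with hCoR
    obtain ⟨c, hc⟩ := hmix
    have hcne : res q (f c) ≠ ρ := fun he => hc (by rw [he, h0])
    have hCoRne : CoR.Nonempty := ⟨c, by simp [hCoR, hcne]⟩
    set M := CoR.min' hCoRne with hM
    have hMmem : M ∈ CoR := CoR.min'_mem hCoRne
    have hMres : res q (f M) ≠ ρ := by simpa [hCoR] using hMmem
    have hM0 : (M : ℕ) ≠ 0 := by
      intro he
      have : M = ⟨0, by omega⟩ := Fin.ext he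
      rw [this] at hMres; exact hMres h0
    have hMlt : (M : ℕ) - 1 < k := by omega
    set Mp : Fin k := ⟨(M : ℕ) - 1, hMlt⟩ with hMp
    have hMpmem : Mp ∉ CoR := by
      intro hmem
      have := CoR.min'_le Mp hmem
      rw [← hM] at this
      have : (M : ℕ) ≤ (Mp : ℕ) := this
      simp [hMp] at this
      omega
    have hMpres : res q (f Mp) = ρ := by
      by_contra hh
      exact hMpmem (by simp [hCoR, hh])
    have harc1 : Arc q (f Mp) (f M) := by
      rw [harc]; simp [hMp]; omega
    have hresM : res q (f M) = (ρ + 1) % q := by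
      rw [← hMpres]
      exact (arc_of_ne_res hq (by rw [hMpres]; exact fun h => hMres h.symm)).mp harc1
    have key : ∀ r : Fin k, res q (f r) = ρ → r = Mp := by
      intro r hr
      have h1 : Arc q (f r) (f M) := by
        rw [arc_of_ne_res hq (by rw [hr]; exact fun h => hMres h.symm), hresM, hr]
      rw [harc] at h1
      apply Fin.ext
      simp [hMp]
      omega
    have := (key a rfl).trans (key b hbρ).symm
    exact hne this
  · set R : Finset (Fin k) := univ.filter (fun i => res q (f i) = ρ) with hR
    have hRne : R.Nonempty := ⟨a, by simp [hR]; rfl⟩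
    set m := R.min' hRne with hm
    have hmmem : m ∈ R := R.min'_mem hRne
    have hmres : res q (f m) = ρ := by simpa [hR] using hmmem
    have hm0 : (m : ℕ) ≠ 0 := by
      intro he
      have : m = ⟨0, by omega⟩ := Fin.ext he
      rw [this] at hmres; exact h0 hmres
    have hmlt : (m : ℕ) - 1 < k := by omega
    set mp : Fin k := ⟨(m : ℕ) - 1, hmlt⟩ with hmp
    have hmpmem : mp ∉ R := by
      intro hmem
      have := R.min'_le mp hmem
      rw [← hm] at this
      have : (m : ℕ) ≤ (mp : ℕ) := this
      simp [hmp] at this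
      omega
    have hmpres : res q (f mp) ≠ ρ := by
      intro hh
      exact hmpmem (by simp [hR, hh])
    have harc1 : Arc q (f mp) (f m) := by
      rw [harc]; simp [hmp]; omega
    have hρeq : ρ = (res q (f mp) + 1) % q := by
      rw [← hmres]
      exact (arc_of_ne_res hq (fun h => hmpres (h.trans hmres))).mp harc1
    have key : ∀ r : Fin k, res q (f r) = ρ → (r : ℕ) = (mp : ℕ) + 1 := by
      intro r hr
      have h1 : Arc q (f mp) (f r) := by
        rw [arc_of_ne_res hq (fun h => hmpres (h.trans hr)), hr, hρeq]
      rw [harc] at h1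
      exact h1
    have := (key a rfl).trans (key b hbρ).symm
    exact hne (Fin.ext this)

/-- `S` is a rainbow set for starting residue `i`. -/
def Rain (q : ℕ) (k : ℕ) {n : ℕ} (i : ℕ) (S : Finset (Fin n)) : Prop :=
  ∃ g : Fin k → Fin n, Function.Injective g ∧ (∀ v, v ∈ S ↔ ∃ j, g j = v) ∧
    ∀ j : Fin k, res q (g j) = (i + (j : ℕ)) % q

lemma mod_succ_mod (q x : ℕ) : (x % q + 1) % q = (x + 1) % q := by
  conv_rhs => rw [Nat.add_mod]
  conv_lhs => rw [Nat.add_mod, Nat.mod_mod_of_dvd _ dvd_rfl]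

/-- Every rainbow set is an induced path (needs `q = k+1`). -/
lemma rain_isInducedPath (hq : q = k + 1) (hk : 2 ≤ k) {i : ℕ} {S : Finset (Fin n)}
    (h : Rain q k i S) : IsInducedPath (fun u v : Fin n => Arc q u v) k S := by
  have hq2 : 2 ≤ q := by omega
  obtain ⟨g, hginj, hgmem, hgres⟩ := h
  refine ⟨g, hginj, hgmem, ?_⟩
  intro a b
  by_cases hab : a = b
  · subst hab
    exact iff_of_false (arc_irrefl q _) (by omega)
  · have hres : res q (g a) ≠ res q (g b) := by
      rw [hgres, hgres]
      intro he
      apply hab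
      have h1 : (i + (a : ℕ)) % q = (i + (b : ℕ)) % q := he
      have h2 : (a : ℕ) % q = (b : ℕ) % q := Nat.ModEq.add_left_cancel' i h1
      have h3 : (a : ℕ) = (b : ℕ) := by
        rwa [Nat.mod_eq_of_lt (by omega), Nat.mod_eq_of_lt (by omega)] at h2
      exact Fin.ext h3
    show Arc q ((g a : Fin n) : ℕ) ((g b : Fin n) : ℕ) ↔ (b : ℕ) = (a : ℕ) + 1
    rw [arc_of_ne_res hq2 hres, hgres, hgres, mod_succ_mod]
    constructor
    · intro he
      have h2 : (b : ℕ) % q = ((a : ℕ) + 1) % q := Nat.ModEq.add_left_cancel' i he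
      have hb : (b : ℕ) < q := by omega
      have ha : (a : ℕ) + 1 < q := by omega
      rwa [Nat.mod_eq_of_lt hb, Nat.mod_eq_of_lt ha] at h2
    · intro he
      rw [show i + (b : ℕ) = i + (a : ℕ) + 1 by omega]

/-- Classification of induced copies. -/
lemma copy_cases (hq : q = k + 1) (hk : 2 ≤ k) {S : Finset (Fin n)}
    (h : IsInducedPath (fun u v : Fin n => Arc q u v) k S) :
    (∃ i, i < q ∧ (∀ v ∈ S, res q v = i)) ∨ (∃ i, i < q ∧ Rain q k i S) := by
  have hq2 : 2 ≤ q := by omega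
  have hq0 : 0 < q := by omega
  obtain ⟨f, hinj, hmem, harc⟩ := h
  by_cases hall : ∀ c : Fin k, res q (f c) = res q (f ⟨0, by omega⟩)
  · refine Or.inl ⟨res q (f ⟨0, by omega⟩), res_lt hq0 _, ?_⟩
    intro v hv
    obtain ⟨j, rfl⟩ := (hmem v).mp hv
    exact hall j
  · push_neg at hall
    have hresinj := res_inj_of_mixed hq2 hk harc hall
    have hsucc : ∀ j : ℕ, (hj : j + 1 < k) →
        res q (f ⟨j+1, hj⟩) = (res q (f ⟨j, by omega⟩) + 1) % q := by
      intro j hj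
      have hne : res q (f ⟨j, by omega⟩) ≠ res q (f ⟨j+1, hj⟩) := by
        intro he
        have := hresinj _ _ he
        rw [Fin.mk.injEq] at this
        omega
      exact (arc_of_ne_res hq2 hne).mp ((harc _ _).mpr (by simp))
    have hformula : ∀ j : ℕ, (hj : j < k) →
        res q (f ⟨j, hj⟩) = (res q (f ⟨0, by omega⟩) + j) % q := by
      intro j
      induction j with
      | zero =>
        intro hj
        rw [Nat.add_zero, Nat.mod_eq_of_lt (res_lt hq0 _)]
      | succ j ih =>
        intro hj
        rw [hsucc j hj, ih (by omega), mod_succ_mod, Nat.add_assoc]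
    refine Or.inr ⟨res q (f ⟨0, by omega⟩), res_lt hq0 _, f, hinj, hmem, ?_⟩
    intro j
    have := hformula (j : ℕ) j.isLt
    rwa [Fin.eta] at this


lemma add_mod_cancel_left' {q i a b : ℕ} (ha : a < q) (hb : b < q)
    (h : (i + a) % q = (i + b) % q) : a = b := by
  have h2 : a % q = b % q := Nat.ModEq.add_left_cancel' i h
  rwa [Nat.mod_eq_of_lt ha, Nat.mod_eq_of_lt hb] at h2

lemma add_mod_cancel_right' {q i a b : ℕ} (ha : a < q) (hb : b < q)
    (h : (a + i) % q = (b + i) % q) : a = b := by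
  have h2 : a % q = b % q := Nat.ModEq.add_right_cancel' i h
  rwa [Nat.mod_eq_of_lt ha, Nat.mod_eq_of_lt hb] at h2

lemma card_filter_res {r : ℕ} (hq0 : 0 < q) (hr : r < q) :
    ((univ : Finset (Fin n)).filter fun v => res q v = r).card = sz q n r := by
  rw [← card_filter_mod hq0 hr n]
  apply Finset.card_bij (fun (v : Fin n) _ => (v : ℕ))
  · intro v hv
    simp only [mem_filter, mem_univ, true_and] at hv
    simp only [mem_filter, mem_range]
    exact ⟨v.2, hv⟩
  · intro a _ b _ hab
    exact Fin.ext hab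
  · intro v hv
    simp only [mem_filter, mem_range] at hv
    exact ⟨⟨v, hv.1⟩, by simp only [mem_filter, mem_univ, true_and]; exact hv.2, rfl⟩

/-- counting copies inside a single part -/
lemma card_part {i : ℕ} (hq : 2 ≤ q) (hi : i < q) :
    (univ.filter fun S : Finset (Fin n) =>
        IsInducedPath (fun u v : Fin n => Arc q (u : ℕ) (v : ℕ)) k S ∧ ∀ v ∈ S, res q v = i).card
      = numPaths (fun u v : Fin (sz q n i) => Arc q (u : ℕ) (v : ℕ)) k := by
  have hq0 : 0 < q := by omega
  set m := sz q n i with hm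
  have hbound : ∀ t : Fin m, q * (t : ℕ) + i < n := fun t => (lt_sz_iff hq0 hi t).mp t.2
  set up : Fin m → Fin n := fun t => ⟨q * (t : ℕ) + i, hbound t⟩ with hup
  have hup_val : ∀ t : Fin m, ((up t : Fin n) : ℕ) = q * (t : ℕ) + i := fun t => rfl
  have hup_res : ∀ t : Fin m, res q (up t) = i := by
    intro t
    unfold res
    rw [hup_val, Nat.mul_add_mod]
    exact Nat.mod_eq_of_lt hi
  have hup_inj : Function.Injective up := by
    intro s t hst
    have h1 : q * (s : ℕ) + i = q * (t : ℕ) + i := congrArg (fun v : Fin n => (v : ℕ)) hst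
    have h2 : q * (s : ℕ) = q * (t : ℕ) := by omega
    exact Fin.ext (Nat.eq_of_mul_eq_mul_left hq0 h2)
  have hup_arc : ∀ s t : Fin m, (Arc q (up s : ℕ) (up t : ℕ) ↔ Arc q (s : ℕ) (t : ℕ)) := by
    intro s t
    by_cases hst : s = t
    · subst hst
      exact iff_of_false (arc_irrefl _ _) (arc_irrefl _ _)
    · have hne : ((up s : Fin n) : ℕ) ≠ ((up t : Fin n) : ℕ) :=
        fun he => hst (hup_inj (Fin.ext he))
      rw [arc_def hq hne, if_pos (by rw [hup_val, hup_val, Nat.mul_add_mod, Nat.mul_add_mod])]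
      rw [hup_val, hup_val, Nat.mul_add_div hq0, Nat.mul_add_div hq0,
        Nat.div_eq_of_lt hi, Nat.add_zero, Nat.add_zero]
  have hdown : ∀ v : Fin n, res q v = i → ∃ t : Fin m, up t = v := by
    intro v hv
    unfold res at hv
    have hveq : q * ((v : ℕ) / q) + i = (v : ℕ) := by
      have := Nat.div_add_mod (v : ℕ) q
      omega
    have htlt : (v : ℕ) / q < m := by
      rw [hm, lt_sz_iff hq0 hi, hveq]
      exact v.2
    exact ⟨⟨(v : ℕ) / q, htlt⟩, Fin.ext hveq⟩
  rw [numPaths]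
  symm
  apply Finset.card_bij (fun (T : Finset (Fin m)) _ => T.image up)
  · intro T hT
    simp only [mem_filter, mem_univ, true_and] at hT ⊢
    obtain ⟨g, hginj, hgmem, hgarc⟩ := hT
    constructor
    · refine ⟨fun j => up (g j), hup_inj.comp hginj, ?_, ?_⟩
      · intro v
        simp only [Finset.mem_image]
        constructor
        · rintro ⟨t, ht, rfl⟩
          obtain ⟨j, rfl⟩ := (hgmem t).mp ht
          exact ⟨j, rfl⟩
        · rintro ⟨j, rfl⟩
          exact ⟨g j, (hgmem _).mpr ⟨j, rfl⟩, rfl⟩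
      · intro a b
        rw [show (fun u v : Fin n => Arc q (u:ℕ) (v:ℕ)) (up (g a)) (up (g b))
            = Arc q (up (g a) : ℕ) (up (g b) : ℕ) from rfl, hup_arc]
        exact hgarc a b
    · intro v hv
      rw [Finset.mem_image] at hv
      obtain ⟨t, _, rfl⟩ := hv
      exact hup_res t
  · intro T1 _ T2 _ h
    exact Finset.image_injective hup_inj h
  · intro S hS
    simp only [mem_filter, mem_univ, true_and] at hS
    obtain ⟨⟨f, hinj, hmem, harc⟩, hres⟩ := hS
    have hfS : ∀ j, f j ∈ S := fun j => (hmem _).mpr ⟨j, rfl⟩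
    have hfup : ∀ j, ∃ t : Fin m, up t = f j := fun j => hdown _ (hres _ (hfS j))
    choose g hg using hfup
    refine ⟨univ.filter (fun t => up t ∈ S), by
      simp only [mem_filter, mem_univ, true_and]
      refine ⟨g, ?_, ?_, ?_⟩
      · intro a b hab
        exact hinj (by rw [← hg a, ← hg b, hab])
      · intro t
        simp only [mem_filter, mem_univ, true_and]
        constructor
        · intro ht
          obtain ⟨j, hj⟩ := (hmem _).mp ht
          exact ⟨j, hup_inj (by rw [hg j, hj])⟩
        · rintro ⟨j, rfl⟩
          rw [hg j]
          exact hfS j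
      · intro a b
        rw [show (fun u v : Fin m => Arc q (u:ℕ) (v:ℕ)) (g a) (g b)
            = Arc q (g a : ℕ) (g b : ℕ) from rfl, ← hup_arc, hg, hg]
        exact harc a b, ?_⟩
    ext v
    simp only [Finset.mem_image, mem_filter, mem_univ, true_and]
    constructor
    · rintro ⟨t, ht, rfl⟩
      exact ht
    · intro hv
      obtain ⟨t, rfl⟩ := hdown v (hres v hv)
      exact ⟨t, hv, rfl⟩

/-- counting rainbow sets for a given start -/
lemma card_rain {i : ℕ} (hq : q = k + 1) (hk : 2 ≤ k) :
    (univ.filter fun S : Finset (Fin n) => Rain q k i S).card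
      = ∏ j ∈ Finset.range k, sz q n ((i + j) % q) := by
  have hq0 : 0 < q := by omega
  have key : ∀ (a b : Fin k), ((i + (a : ℕ)) % q = (i + (b : ℕ)) % q) → a = b := by
    intro a b h
    exact Fin.ext (add_mod_cancel_left' (by omega) (by omega) h)
  have hcard : (Fintype.piFinset (fun j : Fin k =>
      (univ : Finset (Fin n)).filter fun v => res q v = (i + (j : ℕ)) % q)).card
      = ∏ j ∈ Finset.range k, sz q n ((i + j) % q) := by
    rw [Fintype.card_piFinset]
    rw [← Fin.prod_univ_eq_prod_range (fun j => sz q n ((i + j) % q))]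
    exact Finset.prod_congr rfl fun j _ => card_filter_res hq0 (Nat.mod_lt _ hq0)
  rw [← hcard]
  symm
  apply Finset.card_bij (fun (g : Fin k → Fin n) _ => Finset.image g univ)
  · intro g hg
    rw [Fintype.mem_piFinset] at hg
    simp only [mem_filter, mem_univ, true_and] at hg ⊢
    have hres : ∀ j, res q (g j) = (i + (j : ℕ)) % q := fun j => by
      have := hg j; simpa using this
    refine ⟨g, ?_, ?_, hres⟩
    · intro a b hab
      exact key a b (by rw [← hres a, ← hres b, hab])
    · intro v
      simp [Finset.mem_image]
  · intro g1 hg1 g2 hg2 h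
    rw [Fintype.mem_piFinset] at hg1 hg2
    have hres1 : ∀ j, res q (g1 j) = (i + (j : ℕ)) % q := fun j => by
      have := hg1 j; simpa using this
    have hres2 : ∀ j, res q (g2 j) = (i + (j : ℕ)) % q := fun j => by
      have := hg2 j; simpa using this
    funext j
    have : g1 j ∈ Finset.image g2 univ := by
      rw [← h]; exact Finset.mem_image_of_mem _ (mem_univ j)
    rw [Finset.mem_image] at this
    obtain ⟨j2, _, hj2⟩ := this
    have he : j2 = j := key j2 j (by rw [← hres2 j2, hj2, hres1 j])
    rw [← he] at hj2 ⊢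
    exact hj2.symm
  · intro S hS
    simp only [mem_filter, mem_univ, true_and] at hS
    obtain ⟨g, hginj, hgmem, hgres⟩ := hS
    refine ⟨g, ?_, ?_⟩
    · rw [Fintype.mem_piFinset]
      intro j
      simp only [mem_filter, mem_univ, true_and]
      exact hgres j
    · ext v
      simp only [Finset.mem_image, mem_univ, true_and]
      exact (hgmem v).symm


/-- The recursion for the number of induced paths in the iterated blow-up. -/
lemma numPaths_rec (hq : q = k + 1) (hk : 2 ≤ k) (n : ℕ) :
    numPaths (fun u v : Fin n => Arc q (u : ℕ) (v : ℕ)) k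
      = (∑ i ∈ Finset.range q, ∏ j ∈ Finset.range k, sz q n ((i + j) % q))
        + ∑ i ∈ Finset.range q, numPaths (fun u v : Fin (sz q n i) => Arc q (u : ℕ) (v : ℕ)) k := by
  classical
  have hq0 : 0 < q := by omega
  have hq2 : 2 ≤ q := by omega
  set RainF : ℕ → Finset (Finset (Fin n)) :=
    fun i => univ.filter (fun S => Rain q k i S) with hRainF
  set PartF : ℕ → Finset (Finset (Fin n)) :=
    fun i => univ.filter (fun S =>
      IsInducedPath (fun u v : Fin n => Arc q (u : ℕ) (v : ℕ)) k S ∧ ∀ v ∈ S, res q v = i)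
    with hPartF
  have hsplit : (univ.filter fun S : Finset (Fin n) =>
      IsInducedPath (fun u v : Fin n => Arc q (u : ℕ) (v : ℕ)) k S)
      = ((Finset.range q).biUnion RainF) ∪ ((Finset.range q).biUnion PartF) := by
    ext S
    simp only [mem_filter, mem_univ, true_and, Finset.mem_union, Finset.mem_biUnion,
      Finset.mem_range, hRainF, hPartF]
    constructor
    · intro h
      rcases copy_cases hq hk h with ⟨i, hi, hall⟩ | ⟨i, hi, hrain⟩
      · exact Or.inr ⟨i, hi, h, hall⟩
      · exact Or.inl ⟨i, hi, hrain⟩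
    · rintro (⟨i, hi, hrain⟩ | ⟨i, hi, h, _⟩)
      · exact rain_isInducedPath hq hk hrain
      · exact h
  have hdisjRP : Disjoint ((Finset.range q).biUnion RainF) ((Finset.range q).biUnion PartF) := by
    rw [Finset.disjoint_left]
    intro S hS hS'
    simp only [Finset.mem_biUnion, Finset.mem_range, mem_filter, mem_univ, true_and,
      hRainF, hPartF] at hS hS'
    obtain ⟨i, hi, g, hginj, hgmem, hgres⟩ := hS
    obtain ⟨i', hi', _, hall⟩ := hS'
    have h0 : g ⟨0, by omega⟩ ∈ S := (hgmem _).mpr ⟨_, rfl⟩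
    have h1 : g ⟨1, by omega⟩ ∈ S := (hgmem _).mpr ⟨_, rfl⟩
    have e0 := hall _ h0
    have e1 := hall _ h1
    rw [hgres] at e0 e1
    have : (0 : ℕ) = 1 := add_mod_cancel_left' (q := q) (by omega) (by omega)
      (by simp only [Fin.val_mk] at e0 e1; rw [e0, e1])
    omega
  have hdisjR : ∀ i1 ∈ Finset.range q, ∀ i2 ∈ Finset.range q, i1 ≠ i2 →
      Disjoint (RainF i1) (RainF i2) := by
    intro i1 h1 i2 h2 hne
    rw [Finset.mem_range] at h1 h2
    rw [Finset.disjoint_left]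
    intro S hS hS'
    simp only [mem_filter, mem_univ, true_and, hRainF] at hS hS'
    obtain ⟨g, hginj, hgmem, hgres⟩ := hS
    obtain ⟨g', hginj', hgmem', hgres'⟩ := hS'
    -- find index j0 with (i1 + j0) % q = (i2 + k) % q
    set X := i2 + k + q - i1 with hX
    have hXeq : i1 + X = i2 + k + q := by omega
    have hmodeq : (i1 + X % q) % q = (i2 + k) % q := by
      rw [Nat.add_mod_mod, hXeq, Nat.add_mod_right]
    have hj0q : X % q < q := Nat.mod_lt _ hq0
    have hj0k : X % q ≠ k := by
      intro hXk
      rw [hXk] at hmodeq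
      have : i1 = i2 := add_mod_cancel_right' (q := q) h1 h2 hmodeq
      exact hne this
    have hj0 : X % q < k := by omega
    have hvS : g ⟨X % q, hj0⟩ ∈ S := (hgmem _).mpr ⟨_, rfl⟩
    obtain ⟨j', hj'⟩ := (hgmem' _).mp hvS
    have hres' := hgres' j'
    rw [hj'] at hres'
    rw [hgres ⟨X % q, hj0⟩] at hres'
    simp only [Fin.val_mk] at hres'
    -- hres' : (i2 + j') % q = (i1 + X % q) % q = (i2 + k) % q
    have : (j' : ℕ) = k := add_mod_cancel_left' (q := q) (by omega) (by omega)
      (hres'.symm.trans hmodeq)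
    omega
  have hdisjP : ∀ i1 ∈ Finset.range q, ∀ i2 ∈ Finset.range q, i1 ≠ i2 →
      Disjoint (PartF i1) (PartF i2) := by
    intro i1 _ i2 _ hne
    rw [Finset.disjoint_left]
    intro S hS hS'
    simp only [mem_filter, mem_univ, true_and, hPartF] at hS hS'
    obtain ⟨⟨f, _, hmem, _⟩, hall⟩ := hS
    obtain ⟨_, hall'⟩ := hS'
    have h0 : f ⟨0, by omega⟩ ∈ S := (hmem _).mpr ⟨_, rfl⟩
    exact hne ((hall _ h0).symm.trans (hall' _ h0))
  rw [numPaths, hsplit, Finset.card_union_of_disjoint hdisjRP,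
    Finset.card_biUnion hdisjR, Finset.card_biUnion hdisjP]
  congr 1
  · exact Finset.sum_congr rfl fun i _ => card_rain hq hk
  · exact Finset.sum_congr rfl fun i hi =>
      card_part hq2 (Finset.mem_range.mp hi)

end Structure

/- ============ real analysis auxiliary lemmas ============ -/

lemma abs_prod_le' {ι : Type*} (s : Finset ι) (b : ι → ℝ) (C : ℝ) (hC0 : 0 ≤ C)
    (hC : ∀ i ∈ s, |b i| ≤ C) : |∏ i ∈ s, b i| ≤ C ^ s.card := by
  induction s using Finset.cons_induction with
  | empty => simp
  | cons x s hx ih =>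
    rw [Finset.prod_cons, Finset.card_cons, abs_mul, pow_succ']
    exact mul_le_mul (hC x (Finset.mem_cons_self x s)) (ih fun i hi => hC i (Finset.mem_cons.mpr (Or.inr hi)))
      (abs_nonneg _) hC0

lemma abs_prod_sub_prod_le {ι : Type*} (s : Finset ι) (a b : ι → ℝ) (C D : ℝ)
    (hC0 : 0 ≤ C) (hD0 : 0 ≤ D)
    (ha : ∀ i ∈ s, |a i| ≤ C) (hb : ∀ i ∈ s, |b i| ≤ C)
    (hd : ∀ i ∈ s, |a i - b i| ≤ D) :
    |∏ i ∈ s, a i - ∏ i ∈ s, b i| ≤ s.card * D * C ^ (s.card - 1) := by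
  induction s using Finset.cons_induction with
  | empty => simp
  | cons x s hx ih =>
    have hmem : ∀ i ∈ s, i ∈ Finset.cons x s hx := fun i hi => Finset.mem_cons.mpr (Or.inr hi)
    have hxx : x ∈ Finset.cons x s hx := Finset.mem_cons_self x s
    have ih' := ih (fun i hi => ha i (hmem i hi)) (fun i hi => hb i (hmem i hi))
      (fun i hi => hd i (hmem i hi))
    rw [Finset.prod_cons, Finset.prod_cons, Finset.card_cons]
    have key : a x * ∏ i ∈ s, a i - b x * ∏ i ∈ s, b i
        = a x * (∏ i ∈ s, a i - ∏ i ∈ s, b i) + (a x - b x) * ∏ i ∈ s, b i := by ring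
    rw [key]
    have h1 : |a x * (∏ i ∈ s, a i - ∏ i ∈ s, b i)| ≤ C * (s.card * D * C ^ (s.card - 1)) := by
      rw [abs_mul]
      exact mul_le_mul (ha x hxx) ih' (abs_nonneg _) hC0
    have h2 : |(a x - b x) * ∏ i ∈ s, b i| ≤ D * C ^ s.card := by
      rw [abs_mul]
      exact mul_le_mul (hd x hxx) (abs_prod_le' s b C hC0 fun i hi => hb i (hmem i hi))
        (abs_nonneg _) hD0
    refine le_trans (abs_add_le _ _) (le_trans (add_le_add h1 h2) ?_)
    rcases Nat.eq_zero_or_pos s.card with hc | hc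
    · simp [hc]
    · have hpow : C * C ^ (s.card - 1) = C ^ s.card := by
        rw [← pow_succ']
        congr 1
        omega
      have he : C * (s.card * D * C ^ (s.card - 1)) = s.card * D * C ^ s.card := by
        rw [← hpow]; ring
      rw [he, Nat.add_sub_cancel]
      have : ((s.card : ℝ)) * D * C ^ s.card + D * C ^ s.card
          = ((s.card + 1 : ℕ) : ℝ) * D * C ^ s.card := by push_cast; ring
      rw [this]

lemma three_half_pow_le {k : ℕ} (hk : 3 ≤ k) :
    (3/2 : ℝ) ^ (k - 1) * ((k : ℝ) + 1) ≤ (3/4) * ((k : ℝ) + 1) ^ (k - 1) := by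
  -- (3/2)^(k-1) * q ≤ (3/4) q^(k-1)  with q = k+1 ≥ 4
  have h4 : (4 : ℝ) ≤ (k : ℝ) + 1 := by
    have : (3 : ℝ) ≤ (k : ℝ) := by exact_mod_cast hk
    linarith
  have h1 : ∀ m : ℕ, (3/2:ℝ)^(m+2) ≤ (3/4)*4^(m+1) := by
    intro m
    induction m with
    | zero => norm_num
    | succ m ih =>
      have hp : (0:ℝ) ≤ (4:ℝ)^(m+1) := by positivity
      calc (3/2:ℝ)^(m+1+2) = (3/2)^(m+2)*(3/2) := by rw [← pow_succ]
        _ ≤ ((3/4)*4^(m+1))*(3/2) := by nlinarith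
        _ ≤ ((3/4)*4^(m+1))*4 := by nlinarith
        _ = (3/4)*4^(m+1+1) := by rw [pow_succ]; ring
  have h2 : (3/2:ℝ)^(k-1) ≤ (3/4)*4^(k-2) := by
    have := h1 (k-3)
    rw [show k-3+2 = k-1 by omega, show k-3+1 = k-2 by omega] at this
    exact this
  have h3 : (4:ℝ)^(k-2) ≤ ((k:ℝ)+1)^(k-2) := pow_le_pow_left₀ (by norm_num) h4 _
  have h5 : ((k:ℝ)+1)^(k-2)*((k:ℝ)+1) = ((k:ℝ)+1)^(k-1) := by
    rw [← pow_succ]; congr 1; omega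
  have hk1 : (0:ℝ) ≤ (k:ℝ)+1 := by linarith
  calc (3/2 : ℝ) ^ (k - 1) * ((k : ℝ) + 1)
      ≤ ((3/4)*4^(k-2)) * ((k : ℝ) + 1) := by
        apply mul_le_mul_of_nonneg_right h2 hk1
    _ ≤ ((3/4)*((k:ℝ)+1)^(k-2)) * ((k : ℝ) + 1) := by
        have : (3/4:ℝ)*4^(k-2) ≤ (3/4)*((k:ℝ)+1)^(k-2) := by linarith
        apply mul_le_mul_of_nonneg_right this hk1
    _ = (3/4) * ((k : ℝ) + 1) ^ (k - 1) := by rw [mul_assoc, h5]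

/- ============ counting bounds ============ -/

lemma isInducedPath_card {V : Type*} [DecidableEq V] {A : V → V → Prop} {k : ℕ}
    {S : Finset V} (h : IsInducedPath A k S) : S.card = k := by
  obtain ⟨f, hinj, hmem, _⟩ := h
  have hS : S = Finset.image f univ := by
    ext v
    simp only [Finset.mem_image, mem_univ, true_and]
    exact hmem v
  rw [hS, Finset.card_image_of_injective _ hinj, card_univ, Fintype.card_fin]

lemma numPaths_le_choose {V : Type*} [Fintype V] [DecidableEq V] (A : V → V → Prop) (k : ℕ) :
    numPaths A k ≤ (Fintype.card V).choose k := by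
  rw [numPaths, ← Finset.card_univ, ← Finset.card_powersetCard]
  apply Finset.card_le_card
  intro S hS
  simp only [mem_filter, mem_univ, true_and] at hS
  exact Finset.mem_powersetCard.mpr ⟨Finset.subset_univ S, isInducedPath_card hS⟩

/- ============ the analysis ============ -/

noncomputable def FF (q k n : ℕ) : ℕ := numPaths (fun u v : Fin n => Arc q (u : ℕ) (v : ℕ)) k

noncomputable def cst (k : ℕ) : ℝ := (k.factorial : ℝ) / (((k : ℝ) + 1) ^ (k - 1) - 1)

section Analysis

variable {k : ℕ}

lemma den_pos (hk : 3 ≤ k) : (0:ℝ) < ((k : ℝ) + 1) ^ (k - 1) - 1 := by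
  have h1 : (1:ℝ) < ((k : ℝ) + 1) ^ (k - 1) := by
    apply one_lt_pow₀
    · have : (3:ℝ) ≤ (k:ℝ) := by exact_mod_cast hk
      linarith
    · omega
  linarith

lemma cst_pos (hk : 3 ≤ k) : 0 < cst k := by
  apply div_pos _ (den_pos hk)
  exact_mod_cast k.factorial_pos

lemma cst_eq (hk : 3 ≤ k) :
    cst k * ((k : ℝ) + 1) ^ (k - 1) = (k.factorial : ℝ) + cst k := by
  have h := den_pos hk
  rw [cst]
  field_simp
  ring

set_option maxHeartbeats 2000000 in
/-- The main error estimate, by strong induction. -/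
lemma E_bound (hk : 3 ≤ k) (n : ℕ) :
    |(k.factorial : ℝ) * (FF (k+1) k n : ℝ) - cst k * (n : ℝ) ^ k|
      ≤ (max (3 * ((k.factorial : ℝ) + cst k) * k) ((1 + cst k) * (4 * ((k : ℝ) + 1))))
        * ((n : ℝ) + 1) ^ (k - 1) := by
  set c := cst k with hc
  set K := max (3 * ((k.factorial : ℝ) + cst k) * k) ((1 + cst k) * (4 * ((k : ℝ) + 1))) with hK
  have hc0 : 0 < c := cst_pos hk
  have hkf0 : (0:ℝ) < (k.factorial : ℝ) := by exact_mod_cast k.factorial_pos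
  have hq2 : 2 ≤ k + 1 := by omega
  have hq0 : 0 < k + 1 := by omega
  have hqR : (0:ℝ) < ((k:ℝ) + 1) := by positivity
  induction n using Nat.strong_induction_on with
  | _ n ih =>
  by_cases hn : n < 4 * (k + 1)
  · -- base case : crude bound
    have h1 : (k.factorial : ℝ) * (FF (k+1) k n : ℝ) ≤ (n : ℝ) ^ k := by
      have hnat : k.factorial * FF (k+1) k n ≤ n ^ k := by
        calc k.factorial * FF (k+1) k n
            ≤ k.factorial * n.choose k := by
              apply Nat.mul_le_mul_left
              have := numPaths_le_choose (fun u v : Fin n => Arc (k+1) (u : ℕ) (v : ℕ)) k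
              simpa [FF] using this
          _ = n.descFactorial k := (Nat.descFactorial_eq_factorial_mul_choose n k).symm
          _ ≤ n ^ k := Nat.descFactorial_le_pow n k
      exact_mod_cast hnat
    have h2 : (0:ℝ) ≤ (k.factorial : ℝ) * (FF (k+1) k n : ℝ) := by positivity
    have h3 : (0:ℝ) ≤ c * (n:ℝ)^k := by positivity
    have habs : |(k.factorial : ℝ) * (FF (k+1) k n : ℝ) - c * (n : ℝ) ^ k|
        ≤ (1 + c) * (n:ℝ)^k := by
      rw [abs_le]
      constructor
      · nlinarith
      · nlinarith
    have hnk : (n:ℝ)^k ≤ (4 * ((k:ℝ)+1)) * ((n:ℝ)+1)^(k-1) := by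
      have hsplit : (n:ℝ)^k = (n:ℝ)^(k-1) * (n:ℝ) := by
        rw [← pow_succ]; congr 1; omega
      rw [hsplit]
      have hA : (n:ℝ)^(k-1) ≤ ((n:ℝ)+1)^(k-1) :=
        pow_le_pow_left₀ (by positivity) (by linarith) _
      have hB : (n:ℝ) ≤ 4 * ((k:ℝ)+1) := by
        have : (n:ℝ) < 4 * ((k:ℝ)+1) := by exact_mod_cast hn
        linarith
      have h0 : (0:ℝ) ≤ (n:ℝ)^(k-1) := by positivity
      nlinarith [pow_nonneg (show (0:ℝ) ≤ (n:ℝ)+1 by positivity) (k-1)]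
    calc |(k.factorial : ℝ) * (FF (k+1) k n : ℝ) - c * (n : ℝ) ^ k|
        ≤ (1 + c) * (n:ℝ)^k := habs
      _ ≤ (1 + c) * ((4 * ((k:ℝ)+1)) * ((n:ℝ)+1)^(k-1)) := by
          apply mul_le_mul_of_nonneg_left hnk (by linarith)
      _ = ((1 + c) * (4 * ((k:ℝ)+1))) * ((n:ℝ)+1)^(k-1) := by ring
      _ ≤ K * ((n:ℝ)+1)^(k-1) := by
          apply mul_le_mul_of_nonneg_right (le_max_right _ _) (by positivity)
  · -- inductive step
    push_neg at hn
    have hn2 : 2 ≤ n := by omega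
    set x : ℝ := (n : ℝ) / ((k:ℝ)+1) with hx
    have hx0 : 0 ≤ x := by positivity
    set T : ℝ := ∑ i ∈ Finset.range (k+1), ∏ j ∈ Finset.range k,
      ((sz (k+1) n ((i + j) % (k+1)) : ℕ) : ℝ) with hT
    have hrec : (FF (k+1) k n : ℝ)
        = T + ∑ i ∈ Finset.range (k+1), (FF (k+1) k (sz (k+1) n i) : ℝ) := by
      have := numPaths_rec (q := k+1) (k := k) (n := n) rfl (by omega)
      rw [show FF (k+1) k n = numPaths (fun u v : Fin n => Arc (k+1) (u : ℕ) (v : ℕ)) k from rfl,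
        this]
      push_cast
      rfl
    -- bounds on the part sizes
    have hszb : ∀ i, i < k + 1 → (x - 1 ≤ ((sz (k+1) n i : ℕ) : ℝ) ∧ ((sz (k+1) n i : ℕ) : ℝ) ≤ x + 1) := by
      intro i hi
      have := sz_real_bounds (q := k+1) (n := n) (i := i) hq0 hi
      constructor
      · have := this.1; push_cast at this ⊢; convert this using 2 <;> push_cast <;> ring
      · have := this.2; push_cast at this ⊢; convert this using 2 <;> push_cast <;> ring
    -- product bound for a transversal
    have hprod : ∀ i ∈ Finset.range (k+1),
        |∏ j ∈ Finset.range k, ((sz (k+1) n ((i + j) % (k+1)) : ℕ) : ℝ) - x ^ k|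
          ≤ (k:ℝ) * (x + 1) ^ (k - 1) := by
      intro i _
      have := abs_prod_sub_prod_le (Finset.range k)
        (fun j => ((sz (k+1) n ((i + j) % (k+1)) : ℕ) : ℝ)) (fun _ => x) (x+1) 1
        (by positivity) (by norm_num)
        (fun j _ => by
          rw [abs_of_nonneg (by positivity)]
          exact (hszb _ (Nat.mod_lt _ hq0)).2)
        (fun j _ => by rw [abs_of_nonneg hx0]; linarith)
        (fun j _ => by
          have h := hszb ((i + j) % (k+1)) (Nat.mod_lt _ hq0)
          rw [abs_le]; constructor <;> linarith [h.1, h.2])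
      rw [Finset.prod_const, Finset.card_range] at this
      calc |∏ j ∈ Finset.range k, ((sz (k+1) n ((i + j) % (k+1)) : ℕ) : ℝ) - x ^ k|
          ≤ (k:ℝ) * 1 * (x+1)^(k-1) := this
        _ = (k:ℝ) * (x + 1) ^ (k - 1) := by ring
    -- power bound for a single part
    have hpow1 : ∀ i ∈ Finset.range (k+1),
        |((sz (k+1) n i : ℕ) : ℝ) ^ k - x ^ k| ≤ (k:ℝ) * (x + 1) ^ (k - 1) := by
      intro i hi
      have hi' : i < k + 1 := Finset.mem_range.mp hi
      have := abs_prod_sub_prod_le (Finset.range k)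
        (fun _ => ((sz (k+1) n i : ℕ) : ℝ)) (fun _ => x) (x+1) 1
        (by positivity) (by norm_num)
        (fun j _ => by
          rw [abs_of_nonneg (by positivity)]
          exact (hszb _ hi').2)
        (fun j _ => by rw [abs_of_nonneg hx0]; linarith)
        (fun j _ => by
          have h := hszb i hi'
          rw [abs_le]; constructor <;> linarith [h.1, h.2])
      rw [Finset.prod_const, Finset.prod_const, Finset.card_range] at this
      calc |((sz (k+1) n i : ℕ) : ℝ) ^ k - x ^ k|
          ≤ (k:ℝ) * 1 * (x+1)^(k-1) := this
        _ = (k:ℝ) * (x + 1) ^ (k - 1) := by ring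
    have hTbound : |T - ((k:ℝ)+1) * x ^ k| ≤ ((k:ℝ)+1) * ((k:ℝ) * (x + 1) ^ (k - 1)) := by
      have heq : T - ((k:ℝ)+1) * x ^ k
          = ∑ i ∈ Finset.range (k+1),
            (∏ j ∈ Finset.range k, ((sz (k+1) n ((i + j) % (k+1)) : ℕ) : ℝ) - x ^ k) := by
        rw [Finset.sum_sub_distrib, Finset.sum_const, Finset.card_range]
        push_cast
        ring
      rw [heq]
      calc |∑ i ∈ Finset.range (k+1), (∏ j ∈ Finset.range k,
              ((sz (k+1) n ((i + j) % (k+1)) : ℕ) : ℝ) - x ^ k)|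
          ≤ ∑ i ∈ Finset.range (k+1), |∏ j ∈ Finset.range k,
              ((sz (k+1) n ((i + j) % (k+1)) : ℕ) : ℝ) - x ^ k| :=
            Finset.abs_sum_le_sum_abs _ _
        _ ≤ ∑ i ∈ Finset.range (k+1), (k:ℝ) * (x + 1) ^ (k - 1) :=
            Finset.sum_le_sum hprod
        _ = ((k:ℝ)+1) * ((k:ℝ) * (x + 1) ^ (k - 1)) := by
            rw [Finset.sum_const, Finset.card_range]; push_cast; ring
    have hSbound : |∑ i ∈ Finset.range (k+1), ((sz (k+1) n i : ℕ) : ℝ) ^ k - ((k:ℝ)+1) * x ^ k|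
        ≤ ((k:ℝ)+1) * ((k:ℝ) * (x + 1) ^ (k - 1)) := by
      have heq : ∑ i ∈ Finset.range (k+1), ((sz (k+1) n i : ℕ) : ℝ) ^ k - ((k:ℝ)+1) * x ^ k
          = ∑ i ∈ Finset.range (k+1), (((sz (k+1) n i : ℕ) : ℝ) ^ k - x ^ k) := by
        rw [Finset.sum_sub_distrib, Finset.sum_const, Finset.card_range]
        push_cast
        ring
      rw [heq]
      calc |∑ i ∈ Finset.range (k+1), (((sz (k+1) n i : ℕ) : ℝ) ^ k - x ^ k)|
          ≤ ∑ i ∈ Finset.range (k+1), |((sz (k+1) n i : ℕ) : ℝ) ^ k - x ^ k| :=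
            Finset.abs_sum_le_sum_abs _ _
        _ ≤ ∑ i ∈ Finset.range (k+1), (k:ℝ) * (x + 1) ^ (k - 1) :=
            Finset.sum_le_sum hpow1
        _ = ((k:ℝ)+1) * ((k:ℝ) * (x + 1) ^ (k - 1)) := by
            rw [Finset.sum_const, Finset.card_range]; push_cast; ring
    -- the exact fixed-point identity
    have hzero : ((k.factorial:ℝ) + c) * (((k:ℝ)+1) * x ^ k) = c * (n:ℝ)^k := by
      have hqpow : ((k:ℝ)+1) ^ k = ((k:ℝ)+1) ^ (k-1) * ((k:ℝ)+1) := by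
        rw [← pow_succ]; congr 1; omega
      have hcq := cst_eq hk
      rw [hx, div_pow]
      rw [show ((k.factorial:ℝ) + c) * (((k:ℝ)+1) * ((n:ℝ)^k / ((k:ℝ)+1)^k))
          = (((k.factorial:ℝ) + c) * ((k:ℝ)+1)) * ((n:ℝ)^k / ((k:ℝ)+1)^k) by ring]
      rw [← hcq, hqpow]
      field_simp
      ring
    -- decompose the error
    have h1 : ∑ i ∈ Finset.range (k+1),
        ((k.factorial:ℝ) * (FF (k+1) k (sz (k+1) n i) : ℝ) - c * ((sz (k+1) n i : ℕ) : ℝ)^k)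
        = (k.factorial:ℝ) * ∑ i ∈ Finset.range (k+1), (FF (k+1) k (sz (k+1) n i) : ℝ)
          - c * ∑ i ∈ Finset.range (k+1), ((sz (k+1) n i : ℕ) : ℝ)^k := by
      rw [Finset.sum_sub_distrib, Finset.mul_sum, Finset.mul_sum]
    have hEeq : (k.factorial : ℝ) * (FF (k+1) k n : ℝ) - c * (n : ℝ) ^ k
        = (k.factorial:ℝ) * (T - ((k:ℝ)+1) * x ^ k)
          + c * (∑ i ∈ Finset.range (k+1), ((sz (k+1) n i : ℕ) : ℝ) ^ k - ((k:ℝ)+1) * x ^ k)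
          + ∑ i ∈ Finset.range (k+1),
            ((k.factorial:ℝ) * (FF (k+1) k (sz (k+1) n i) : ℝ) - c * ((sz (k+1) n i : ℕ) : ℝ)^k) := by
      rw [h1]
      linear_combination (k.factorial:ℝ) * hrec + hzero
    -- the common bound Y
    set Y : ℝ := ((3/2) * ((n:ℝ)+1) / ((k:ℝ)+1)) ^ (k-1) with hY
    have hY0 : 0 ≤ Y := by positivity
    have hb32 : (n:ℝ) + 2*((k:ℝ)+1) ≤ (3/2) * ((n:ℝ)+1) := by
      have : (4:ℝ) * ((k:ℝ)+1) ≤ (n:ℝ) := by exact_mod_cast hn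
      linarith
    have hxb : x + 1 ≤ (3/2) * ((n:ℝ)+1) / ((k:ℝ)+1) := by
      rw [le_div_iff₀ hqR]
      have hmul : (x + 1) * ((k:ℝ)+1) = (n:ℝ) + ((k:ℝ)+1) := by
        rw [hx]; field_simp
      rw [hmul]
      linarith
    have hxY : (x + 1) ^ (k-1) ≤ Y := pow_le_pow_left₀ (by positivity) hxb _
    have hszY : ∀ i ∈ Finset.range (k+1), (((sz (k+1) n i : ℕ) : ℝ) + 1) ^ (k-1) ≤ Y := by
      intro i hi
      apply pow_le_pow_left₀ (by positivity)
      have h := (hszb i (Finset.mem_range.mp hi)).2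
      calc ((sz (k+1) n i : ℕ) : ℝ) + 1 ≤ (x + 1) + 1 := by linarith
        _ ≤ (3/2) * ((n:ℝ)+1) / ((k:ℝ)+1) := by
            rw [le_div_iff₀ hqR]
            have hmul : ((x + 1) + 1) * ((k:ℝ)+1) = (n:ℝ) + 2*((k:ℝ)+1) := by
              rw [hx]; field_simp; ring
            rw [hmul]
            linarith
    -- apply induction hypothesis to the parts
    have hIH : ∀ i ∈ Finset.range (k+1),
        |(k.factorial:ℝ) * (FF (k+1) k (sz (k+1) n i) : ℝ) - c * ((sz (k+1) n i : ℕ) : ℝ)^k|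
          ≤ K * Y := by
      intro i hi
      have hlt : sz (k+1) n i < n := sz_lt_self hq2 hn2
      calc |(k.factorial:ℝ) * (FF (k+1) k (sz (k+1) n i) : ℝ) - c * ((sz (k+1) n i : ℕ) : ℝ)^k|
          ≤ K * (((sz (k+1) n i : ℕ) : ℝ) + 1) ^ (k-1) := ih _ hlt
        _ ≤ K * Y := by
            apply mul_le_mul_of_nonneg_left (hszY i hi)
            have : (0:ℝ) < (1 + c) * (4 * ((k:ℝ)+1)) := by positivity
            calc (0:ℝ) ≤ (1 + c) * (4 * ((k:ℝ)+1)) := le_of_lt this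
              _ ≤ K := le_max_right _ _
    have hKpos : (0:ℝ) ≤ K := by
      have : (0:ℝ) < (1 + c) * (4 * ((k:ℝ)+1)) := by positivity
      calc (0:ℝ) ≤ (1 + c) * (4 * ((k:ℝ)+1)) := le_of_lt this
        _ ≤ K := le_max_right _ _
    -- put everything together
    have hsum : |∑ i ∈ Finset.range (k+1),
        ((k.factorial:ℝ) * (FF (k+1) k (sz (k+1) n i) : ℝ) - c * ((sz (k+1) n i : ℕ) : ℝ)^k)|
        ≤ ((k:ℝ)+1) * (K * Y) := by
      calc |∑ i ∈ Finset.range (k+1),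
          ((k.factorial:ℝ) * (FF (k+1) k (sz (k+1) n i) : ℝ) - c * ((sz (k+1) n i : ℕ) : ℝ)^k)|
          ≤ ∑ i ∈ Finset.range (k+1),
            |(k.factorial:ℝ) * (FF (k+1) k (sz (k+1) n i) : ℝ) - c * ((sz (k+1) n i : ℕ) : ℝ)^k| :=
            Finset.abs_sum_le_sum_abs _ _
        _ ≤ ∑ i ∈ Finset.range (k+1), K * Y := Finset.sum_le_sum hIH
        _ = ((k:ℝ)+1) * (K * Y) := by
            rw [Finset.sum_const, Finset.card_range]; push_cast; ring
    have hqY : ((k:ℝ)+1) * Y ≤ (3/4) * ((n:ℝ)+1)^(k-1) := by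
      have hYsplit : Y = (3/2)^(k-1) * (((n:ℝ)+1) / ((k:ℝ)+1))^(k-1) := by
        rw [hY, ← mul_pow]
        congr 1
        ring
      have h35 := three_half_pow_le hk
      have hpos : (0:ℝ) ≤ (((n:ℝ)+1) / ((k:ℝ)+1))^(k-1) := by positivity
      have hcancel : ((k:ℝ)+1)^(k-1) * (((n:ℝ)+1) / ((k:ℝ)+1))^(k-1) = ((n:ℝ)+1)^(k-1) := by
        rw [← mul_pow]
        congr 1
        field_simp
      calc ((k:ℝ)+1) * Y = ((3/2)^(k-1) * ((k:ℝ)+1)) * (((n:ℝ)+1) / ((k:ℝ)+1))^(k-1) := by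
            rw [hYsplit]; ring
        _ ≤ ((3/4) * ((k:ℝ)+1)^(k-1)) * (((n:ℝ)+1) / ((k:ℝ)+1))^(k-1) :=
            mul_le_mul_of_nonneg_right h35 hpos
        _ = (3/4) * ((n:ℝ)+1)^(k-1) := by rw [mul_assoc, hcancel]
    -- final combination
    have hxYk : (k:ℝ) * (x + 1) ^ (k - 1) ≤ (k:ℝ) * Y := by
      apply mul_le_mul_of_nonneg_left hxY (by positivity)
    have final : |(k.factorial : ℝ) * (FF (k+1) k n : ℝ) - c * (n : ℝ) ^ k|
        ≤ ((k.factorial:ℝ) + c) * ((k:ℝ) * (((k:ℝ)+1) * Y)) + K * (((k:ℝ)+1) * Y) := by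
      rw [hEeq]
      have hA : |(k.factorial:ℝ) * (T - ((k:ℝ)+1) * x ^ k)|
          ≤ (k.factorial:ℝ) * (((k:ℝ)+1) * ((k:ℝ) * Y)) := by
        rw [abs_mul, abs_of_nonneg (le_of_lt hkf0)]
        apply mul_le_mul_of_nonneg_left _ (le_of_lt hkf0)
        calc |T - ((k:ℝ)+1) * x ^ k| ≤ ((k:ℝ)+1) * ((k:ℝ) * (x + 1) ^ (k - 1)) := hTbound
          _ ≤ ((k:ℝ)+1) * ((k:ℝ) * Y) := by
              apply mul_le_mul_of_nonneg_left hxYk (by positivity)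
      have hB : |c * (∑ i ∈ Finset.range (k+1), ((sz (k+1) n i : ℕ) : ℝ) ^ k - ((k:ℝ)+1) * x ^ k)|
          ≤ c * (((k:ℝ)+1) * ((k:ℝ) * Y)) := by
        rw [abs_mul, abs_of_nonneg (le_of_lt hc0)]
        apply mul_le_mul_of_nonneg_left _ (le_of_lt hc0)
        calc |∑ i ∈ Finset.range (k+1), ((sz (k+1) n i : ℕ) : ℝ) ^ k - ((k:ℝ)+1) * x ^ k|
            ≤ ((k:ℝ)+1) * ((k:ℝ) * (x + 1) ^ (k - 1)) := hSbound
          _ ≤ ((k:ℝ)+1) * ((k:ℝ) * Y) := by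
              apply mul_le_mul_of_nonneg_left hxYk (by positivity)
      calc |(k.factorial:ℝ) * (T - ((k:ℝ)+1) * x ^ k)
            + c * (∑ i ∈ Finset.range (k+1), ((sz (k+1) n i : ℕ) : ℝ) ^ k - ((k:ℝ)+1) * x ^ k)
            + ∑ i ∈ Finset.range (k+1),
              ((k.factorial:ℝ) * (FF (k+1) k (sz (k+1) n i) : ℝ) - c * ((sz (k+1) n i : ℕ) : ℝ)^k)|
          ≤ |(k.factorial:ℝ) * (T - ((k:ℝ)+1) * x ^ k)
              + c * (∑ i ∈ Finset.range (k+1), ((sz (k+1) n i : ℕ) : ℝ) ^ k - ((k:ℝ)+1) * x ^ k)|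
            + |∑ i ∈ Finset.range (k+1),
              ((k.factorial:ℝ) * (FF (k+1) k (sz (k+1) n i) : ℝ) - c * ((sz (k+1) n i : ℕ) : ℝ)^k)| :=
            abs_add_le _ _
        _ ≤ (|(k.factorial:ℝ) * (T - ((k:ℝ)+1) * x ^ k)|
              + |c * (∑ i ∈ Finset.range (k+1), ((sz (k+1) n i : ℕ) : ℝ) ^ k - ((k:ℝ)+1) * x ^ k)|)
            + ((k:ℝ)+1) * (K * Y) := by
            apply add_le_add (abs_add_le _ _) hsum
        _ ≤ ((k.factorial:ℝ) * (((k:ℝ)+1) * ((k:ℝ) * Y)) + c * (((k:ℝ)+1) * ((k:ℝ) * Y)))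
            + ((k:ℝ)+1) * (K * Y) := by
            apply add_le_add (add_le_add hA hB) le_rfl
        _ = ((k.factorial:ℝ) + c) * ((k:ℝ) * (((k:ℝ)+1) * Y)) + K * (((k:ℝ)+1) * Y) := by ring
    calc |(k.factorial : ℝ) * (FF (k+1) k n : ℝ) - c * (n : ℝ) ^ k|
        ≤ ((k.factorial:ℝ) + c) * ((k:ℝ) * (((k:ℝ)+1) * Y)) + K * (((k:ℝ)+1) * Y) := final
      _ = (((k.factorial:ℝ) + c) * (k:ℝ) + K) * (((k:ℝ)+1) * Y) := by ring
      _ ≤ (((k.factorial:ℝ) + c) * (k:ℝ) + K) * ((3/4) * ((n:ℝ)+1)^(k-1)) := by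
          have hnn : (0:ℝ) ≤ ((k.factorial:ℝ) + c) * (k:ℝ) + K :=
            add_nonneg (mul_nonneg (by positivity) (by positivity)) hKpos
          exact mul_le_mul_of_nonneg_left hqY hnn
      _ ≤ K * ((n:ℝ)+1)^(k-1) := by
          have hKge : 3 * ((k.factorial : ℝ) + c) * (k:ℝ) ≤ K := le_max_left _ _
          have hp : (0:ℝ) ≤ ((n:ℝ)+1)^(k-1) := by positivity
          nlinarith
  done

end Analysis

/- ============ from the error bound to convergence ============ -/

lemma desc_prod_real {k n : ℕ} (hkn : k ≤ n) :
    ((k.factorial * n.choose k : ℕ) : ℝ) = ∏ j ∈ Finset.range k, ((n : ℝ) - (j : ℝ)) := by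
  rw [← Nat.descFactorial_eq_factorial_mul_choose, Nat.descFactorial_eq_prod_range]
  push_cast
  apply Finset.prod_congr rfl
  intro j hj
  have : j ≤ n := le_trans (le_of_lt (Finset.mem_range.mp hj)) hkn
  rw [Nat.cast_sub this]

lemma choose_lower {k n : ℕ} (hk : 1 ≤ k) (hn : 2 * k ≤ n) :
    ((n : ℝ) / 2) ^ k ≤ ((k.factorial * n.choose k : ℕ) : ℝ) := by
  rw [desc_prod_real (by omega)]
  have hconst : ((n:ℝ)/2)^k = ∏ _j ∈ Finset.range k, ((n:ℝ)/2) := by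
    rw [Finset.prod_const, Finset.card_range]
  rw [hconst]
  apply Finset.prod_le_prod
  · intro j _; positivity
  · intro j hj
    have hj' : j < k := Finset.mem_range.mp hj
    have h2kn : (2 * k : ℝ) ≤ (n : ℝ) := by exact_mod_cast hn
    have hjk : (j : ℝ) < (k : ℝ) := by exact_mod_cast hj'
    linarith

lemma choose_diff {k n : ℕ} (hk : 1 ≤ k) (hn : k ≤ n) :
    |(n : ℝ) ^ k - ((k.factorial * n.choose k : ℕ) : ℝ)| ≤ (k:ℝ) * (k:ℝ) * (n:ℝ) ^ (k - 1) := by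
  rw [desc_prod_real hn]
  have hnR : (0:ℝ) ≤ (n:ℝ) := by positivity
  have := abs_prod_sub_prod_le (Finset.range k)
    (fun _ => (n : ℝ)) (fun j => (n:ℝ) - (j:ℝ)) (n:ℝ) (k:ℝ) hnR (by positivity)
    (fun j _ => by rw [abs_of_nonneg hnR])
    (fun j hjm => by
      show |(n:ℝ) - (j:ℝ)| ≤ (n:ℝ)
      have hj : (j:ℝ) < (k:ℝ) := by exact_mod_cast Finset.mem_range.mp hjm
      have hkn : (k:ℝ) ≤ (n:ℝ) := by exact_mod_cast hn
      rw [abs_of_nonneg (by linarith)]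
      linarith)
    (fun j hjm => by
      show |(n:ℝ) - ((n:ℝ) - (j:ℝ))| ≤ (k:ℝ)
      have hj : (j:ℝ) < (k:ℝ) := by exact_mod_cast Finset.mem_range.mp hjm
      have hj0 : (0:ℝ) ≤ (j:ℝ) := by positivity
      rw [show (n:ℝ) - ((n:ℝ) - (j:ℝ)) = (j:ℝ) by ring, abs_of_nonneg hj0]
      linarith)
  rw [Finset.prod_const, Finset.card_range] at this
  calc |(n : ℝ) ^ k - ∏ j ∈ Finset.range k, ((n:ℝ) - (j:ℝ))|
      ≤ (k:ℝ) * (k:ℝ) * (n:ℝ) ^ (k - 1) := this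

lemma tendsto_density (hk : 3 ≤ k) :
    Filter.Tendsto (fun n : ℕ => (FF (k+1) k n : ℝ) / ((n.choose k : ℕ) : ℝ))
      Filter.atTop (nhds (cst k)) := by
  set c := cst k with hc
  set K := max (3 * ((k.factorial : ℝ) + cst k) * k) ((1 + cst k) * (4 * ((k : ℝ) + 1))) with hK
  have hc0 : 0 < c := cst_pos hk
  have hKpos : (0:ℝ) ≤ K := by
    have h1 : (0:ℝ) < (1 + c) * (4 * ((k:ℝ)+1)) := by positivity
    calc (0:ℝ) ≤ (1 + c) * (4 * ((k:ℝ)+1)) := le_of_lt h1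
      _ ≤ K := le_max_right _ _
  set B : ℝ := (K * 2^(k-1) + c * (k:ℝ) * (k:ℝ)) * 2^k with hB
  have key : ∀ n : ℕ, 2 * k ≤ n →
      |(FF (k+1) k n : ℝ) / ((n.choose k : ℕ) : ℝ) - c| ≤ B / (n:ℝ) := by
    intro n hn
    have hn1 : 1 ≤ n := by omega
    have hnR : (0:ℝ) < (n:ℝ) := by exact_mod_cast (by omega : 0 < n)
    have hD0 : (0:ℝ) < ((k.factorial * n.choose k : ℕ) : ℝ) := by
      have h1 : 0 < k.factorial * n.choose k :=
        Nat.mul_pos k.factorial_pos (Nat.choose_pos (by omega))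
      exact_mod_cast h1
    have hch0 : ((n.choose k : ℕ) : ℝ) ≠ 0 := by
      have : 0 < n.choose k := Nat.choose_pos (by omega)
      positivity
    have hfac0 : ((k.factorial : ℕ) : ℝ) ≠ 0 := by
      have := k.factorial_pos; positivity
    -- rewrite the difference
    have heq : (FF (k+1) k n : ℝ) / ((n.choose k : ℕ) : ℝ) - c
        = ((k.factorial:ℝ) * (FF (k+1) k n : ℝ) - c * (n:ℝ)^k
            + c * ((n:ℝ)^k - ((k.factorial * n.choose k : ℕ) : ℝ)))
          / ((k.factorial * n.choose k : ℕ) : ℝ) := by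
      push_cast
      field_simp
      ring
    rw [heq, abs_div, abs_of_pos hD0, div_le_div_iff₀ hD0 hnR]
    -- numerator bound
    have hnum : |(k.factorial:ℝ) * (FF (k+1) k n : ℝ) - c * (n:ℝ)^k
        + c * ((n:ℝ)^k - ((k.factorial * n.choose k : ℕ) : ℝ))|
        ≤ (K * 2^(k-1) + c * (k:ℝ) * (k:ℝ)) * (n:ℝ)^(k-1) := by
      have h1 := E_bound hk n
      have h2 := choose_diff (by omega : 1 ≤ k) (by omega : k ≤ n) (n := n)
      have h3 : ((n:ℝ)+1)^(k-1) ≤ (2:ℝ)^(k-1) * (n:ℝ)^(k-1) := by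
        rw [← mul_pow]
        apply pow_le_pow_left₀ (by positivity)
        have : (1:ℝ) ≤ (n:ℝ) := by exact_mod_cast hn1
        linarith
      calc |(k.factorial:ℝ) * (FF (k+1) k n : ℝ) - c * (n:ℝ)^k
          + c * ((n:ℝ)^k - ((k.factorial * n.choose k : ℕ) : ℝ))|
          ≤ |(k.factorial:ℝ) * (FF (k+1) k n : ℝ) - c * (n:ℝ)^k|
            + |c * ((n:ℝ)^k - ((k.factorial * n.choose k : ℕ) : ℝ))| := abs_add_le _ _
        _ ≤ K * ((n:ℝ)+1)^(k-1) + c * ((k:ℝ) * (k:ℝ) * (n:ℝ)^(k-1)) := by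
            apply add_le_add h1
            rw [abs_mul, abs_of_pos hc0]
            exact mul_le_mul_of_nonneg_left h2 (le_of_lt hc0)
        _ ≤ K * ((2:ℝ)^(k-1) * (n:ℝ)^(k-1)) + c * ((k:ℝ) * (k:ℝ) * (n:ℝ)^(k-1)) := by
            apply add_le_add _ le_rfl
            exact mul_le_mul_of_nonneg_left h3 hKpos
        _ = (K * 2^(k-1) + c * (k:ℝ) * (k:ℝ)) * (n:ℝ)^(k-1) := by ring
    -- denominator bound
    have hden : ((n:ℝ)/2)^k ≤ ((k.factorial * n.choose k : ℕ) : ℝ) :=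
      choose_lower (by omega) hn
    -- combine
    have hsplit : ((n:ℝ)/2)^k * 2^k = (n:ℝ)^(k-1) * (n:ℝ) := by
      rw [div_pow, div_mul_cancel₀]
      · rw [← pow_succ]; congr 1; omega
      · positivity
    calc |(k.factorial:ℝ) * (FF (k+1) k n : ℝ) - c * (n:ℝ)^k
        + c * ((n:ℝ)^k - ((k.factorial * n.choose k : ℕ) : ℝ))| * (n:ℝ)
        ≤ ((K * 2^(k-1) + c * (k:ℝ) * (k:ℝ)) * (n:ℝ)^(k-1)) * (n:ℝ) := by
          exact mul_le_mul_of_nonneg_right hnum (le_of_lt hnR)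
      _ = (K * 2^(k-1) + c * (k:ℝ) * (k:ℝ)) * ((n:ℝ)^(k-1) * (n:ℝ)) := by ring
      _ = (K * 2^(k-1) + c * (k:ℝ) * (k:ℝ)) * (((n:ℝ)/2)^k * 2^k) := by rw [hsplit]
      _ = B * ((n:ℝ)/2)^k := by rw [hB]; ring
      _ ≤ B * ((k.factorial * n.choose k : ℕ) : ℝ) := by
          apply mul_le_mul_of_nonneg_left hden
          have h0 : (0:ℝ) ≤ K * 2^(k-1) + c * (k:ℝ) * (k:ℝ) := by positivity
          rw [hB]; positivity
  -- squeeze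
  have h0 : Filter.Tendsto (fun n : ℕ => B / (n:ℝ)) Filter.atTop (nhds 0) :=
    tendsto_const_div_atTop_nhds_zero_nat B
  have hzero : Filter.Tendsto
      (fun n : ℕ => (FF (k+1) k n : ℝ) / ((n.choose k : ℕ) : ℝ) - c) Filter.atTop (nhds 0) := by
    apply squeeze_zero_norm' _ h0
    filter_upwards [Filter.eventually_atTop.mpr ⟨2*k, fun n hn => key n hn⟩] with n hn
    exact hn
  have := hzero.add_const c
  simpa using this

/- ============ the case k = 2 : tournaments ============ -/

lemma path_of_pair {n : ℕ} {a b : Fin n} (h : a < b) :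
    IsInducedPath (fun u v : Fin n => u < v) 2 ({a, b} : Finset (Fin n)) := by
  refine ⟨fun i => if i = 0 then a else b, ?_, ?_, ?_⟩
  · intro i j hij
    fin_cases i <;> fin_cases j <;> simp_all <;> exact absurd hij.symm (ne_of_lt h) <;> rfl
  · intro v
    simp only [Finset.mem_insert, Finset.mem_singleton]
    constructor
    · rintro (rfl | rfl)
      · exact ⟨0, by norm_num⟩
      · exact ⟨1, by norm_num⟩
    · rintro ⟨i, rfl⟩
      fin_cases i
      · left; norm_num
      · right; norm_num
  · intro i j
    fin_cases i <;> fin_cases j <;>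
      simp [lt_irrefl, h, lt_asymm h]

lemma numPaths_lt_two (n : ℕ) :
    numPaths (fun u v : Fin n => u < v) 2 = n.choose 2 := by
  rw [numPaths]
  have hset : (univ.filter fun S : Finset (Fin n) =>
      IsInducedPath (fun u v : Fin n => u < v) 2 S)
      = Finset.powersetCard 2 (univ : Finset (Fin n)) := by
    ext S
    simp only [mem_filter, mem_univ, true_and, Finset.mem_powersetCard]
    constructor
    · intro h
      exact ⟨Finset.subset_univ S, isInducedPath_card h⟩
    · rintro ⟨-, hcard⟩
      obtain ⟨a, b, hab, rfl⟩ := Finset.card_eq_two.mp hcard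
      rcases lt_or_gt_of_ne hab with h | h
      · exact path_of_pair h
      · rw [Finset.pair_comm]
        exact path_of_pair h
  rw [hset, Finset.card_powersetCard, Finset.card_univ, Fintype.card_fin]

/- ============ basic density bounds ============ -/

lemma pathDensity_nonneg {V : Type*} [Fintype V] [DecidableEq V] (A : V → V → Prop) (k : ℕ) :
    0 ≤ pathDensity A k := by
  rw [pathDensity]
  positivity

lemma pathDensity_le_one {V : Type*} [Fintype V] [DecidableEq V] (A : V → V → Prop) (k : ℕ) :
    pathDensity A k ≤ 1 := by
  rw [pathDensity]
  rcases Nat.eq_zero_or_pos ((Fintype.card V).choose k) with h | h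
  · rw [h]
    norm_num
  · rw [div_le_one (by exact_mod_cast h)]
    exact_mod_cast numPaths_le_choose A k


/-- `I(P⃗ₖ) ≥ k!/((k+1)^{k−1} − 1)`, and this bound is achieved in
the limit by a sequence of oriented graphs (the iterated balanced blow-ups of
`C⃗_{k+1}`); in particular `I(P⃗₄) ≥ 6/31`, `I(P⃗₅) ≥ 24/259`, `I(P⃗₆) ≥ 120/2801`. -/

theorem inducibility_Pk_lower (k : ℕ) (hk : 2 ≤ k) :
    (Nat.factorial k : ℝ) / (((k : ℝ) + 1) ^ (k - 1) - 1) ≤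
      Filter.atTop.liminf (fun n : ℕ => maxDensityAll k n) ∧
    ∃ A : (n : ℕ) → Fin n → Fin n → Prop, (∀ n, IsOriented (A n)) ∧
      Filter.Tendsto (fun n : ℕ => pathDensity (A n) k) Filter.atTop
        (nhds ((Nat.factorial k : ℝ) / (((k : ℝ) + 1) ^ (k - 1) - 1))) := by
  obtain ⟨A, hor, ht⟩ : ∃ A : (n : ℕ) → Fin n → Fin n → Prop, (∀ n, IsOriented (A n)) ∧
      Filter.Tendsto (fun n : ℕ => pathDensity (A n) k) Filter.atTop
        (nhds ((Nat.factorial k : ℝ) / (((k : ℝ) + 1) ^ (k - 1) - 1))) := by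
    rcases (by omega : k = 2 ∨ 3 ≤ k) with rfl | h3
    · refine ⟨fun n u v => u < v, fun n a b hab hba => (lt_asymm hab) hba, ?_⟩
      have hval : (Nat.factorial 2 : ℝ) / ((((2:ℕ) : ℝ) + 1) ^ (2 - 1) - 1) = 1 := by
        norm_num [Nat.factorial]
      rw [hval]
      apply Filter.Tendsto.congr' _ tendsto_const_nhds
      filter_upwards [Filter.eventually_ge_atTop 2] with n hn
      have hch : (0:ℝ) < ((n.choose 2 : ℕ) : ℝ) := by
        exact_mod_cast Nat.choose_pos hn
      show (1:ℝ) = pathDensity (fun u v : Fin n => u < v) 2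
      rw [pathDensity, Fintype.card_fin, numPaths_lt_two, div_self (ne_of_gt hch)]
    · refine ⟨fun n u v => Arc (k+1) (u : ℕ) (v : ℕ), ?_, ?_⟩
      · intro n a b hab hba
        exact arc_asymm (by omega) _ _ hab hba
      · have htd := tendsto_density h3
        have heq : ∀ n : ℕ, (FF (k+1) k n : ℝ) / ((n.choose k : ℕ) : ℝ)
            = pathDensity (fun u v : Fin n => Arc (k+1) (u : ℕ) (v : ℕ)) k := by
          intro n
          rw [pathDensity, Fintype.card_fin]
          rfl
        exact (htd.congr heq)
  refine ⟨?_, A, hor, ht⟩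
  have hbdd : ∀ n, BddAbove {d : ℝ | ∃ B : Fin n → Fin n → Prop, IsOriented B ∧ d = pathDensity B k} := by
    intro n
    refine ⟨1, ?_⟩
    rintro d ⟨B, -, rfl⟩
    exact pathDensity_le_one B k
  have hle : ∀ n, pathDensity (A n) k ≤ maxDensityAll k n := fun n =>
    le_csSup (hbdd n) ⟨A n, hor n, rfl⟩
  have h1 : Filter.atTop.liminf (fun n : ℕ => pathDensity (A n) k)
      = (Nat.factorial k : ℝ) / (((k : ℝ) + 1) ^ (k - 1) - 1) := ht.liminf_eq
  rw [← h1]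
  refine Filter.liminf_le_liminf (Filter.Eventually.of_forall hle) ?_ ?_
  · exact Filter.isBoundedUnder_of ⟨0, fun n => pathDensity_nonneg (A n) k⟩
  · refine Filter.IsBoundedUnder.isCoboundedUnder_ge (Filter.isBoundedUnder_of ⟨1, fun n => ?_⟩)
    refine csSup_le ⟨pathDensity (A n) k, A n, hor n, rfl⟩ ?_
    rintro d ⟨B, -, rfl⟩
    exact pathDensity_le_one B k
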